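/- Let 1 ≤ ℓ ≤ k and let π₁, …, π_ℓ be up-right paths with values in {1,…,N}×{1,…,k} having pairwise disjoint supports. Then there exist up-right paths π'₁, …, π'_ℓ with values in {1,…,N}×{1,…,k}, with pairwise disjoint supports and starting abscissas all equal to 1, such that the union of the supports of the π_i is contained in the union of the supports of the π'_i. -/

import Mathlib

/-- `IsUpRightPath N k p π` : `π` is an up-right path on `{1,…,p}` with values in
`{1,…,N} × {1,…,k}`: at each step, exactly one coordinate increases by `1`. -/
def IsUpRightPath (N k p : ℕ) (π : ℕ → ℕ × ℕ) : Prop :=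
  (∀ i, 1 ≤ i → i ≤ p → (1 ≤ (π i).1 ∧ (π i).1 ≤ N) ∧ (1 ≤ (π i).2 ∧ (π i).2 ≤ k)) ∧
  (∀ i, 2 ≤ i → i ≤ p →
    ((π i).1 = (π (i - 1)).1 + 1 ∧ (π i).2 = (π (i - 1)).2) ∨
    ((π i).1 = (π (i - 1)).1 ∧ (π i).2 = (π (i - 1)).2 + 1))

/-- The support of a path `π` defined on `{1,…,p}`: its image. -/
def pathSupport (p : ℕ) (π : ℕ → ℕ × ℕ) : Set (ℕ × ℕ) := π '' (Set.Icc 1 p)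

namespace URP
open List

def Step (a b : ℕ × ℕ) : Prop :=
  (b.1 = a.1 + 1 ∧ b.2 = a.2) ∨ (b.1 = a.1 ∧ b.2 = a.2 + 1)

def InGrid (N k : ℕ) (a : ℕ × ℕ) : Prop :=
  1 ≤ a.1 ∧ a.1 ≤ N ∧ 1 ≤ a.2 ∧ a.2 ≤ k

def Valid (N k : ℕ) (L : List (ℕ × ℕ)) : Prop :=
  L ≠ [] ∧ (∀ a ∈ L, InGrid N k a) ∧ L.Chain' Step

def supp (L : List (ℕ × ℕ)) : Set (ℕ × ℕ) := {a | a ∈ L}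

lemma mem_supp {L : List (ℕ × ℕ)} {a} : a ∈ supp L ↔ a ∈ L := Iff.rfl

lemma step_diag {a b : ℕ × ℕ} (h : Step a b) : a.1 + a.2 + 1 = b.1 + b.2 := by
  rcases h with ⟨h1, h2⟩ | ⟨h1, h2⟩ <;> omega

lemma pairwise_diag {L : List (ℕ × ℕ)} (h : L.Chain' Step) :
    L.Pairwise (fun a b => a.1 + a.2 < b.1 + b.2) := by
  haveI : IsTrans (ℕ × ℕ) (fun a b => a.1 + a.2 < b.1 + b.2) :=
    ⟨fun _ _ _ h1 h2 => lt_trans h1 h2⟩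
  exact List.isChain_iff_pairwise.mp (h.imp (fun {a b} hs => by have := step_diag hs; omega))

lemma nodup_of_chain {L : List (ℕ × ℕ)} (h : L.Chain' Step) : L.Nodup :=
  (pairwise_diag h).imp (fun {a b} hl => by intro hab; rw [hab] at hl; omega)

lemma diag_head_le {L : List (ℕ × ℕ)} (h : L.Chain' Step) {a : ℕ × ℕ} (ha : a ∈ L) :
    L.headI.1 + L.headI.2 ≤ a.1 + a.2 := by
  cases L with
  | nil => simp at ha
  | cons b t =>
    rcases List.mem_cons.mp ha with rfl | ha
    · simp
    · have := List.rel_of_pairwise_cons (pairwise_diag h) ha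
      simpa using this.le

lemma x_mono {L : List (ℕ × ℕ)} (h : L.Chain' Step) :
    L.Pairwise (fun a b => a.1 ≤ b.1) := by
  haveI : IsTrans (ℕ × ℕ) (fun a b : ℕ × ℕ => a.1 ≤ b.1) :=
    ⟨fun _ _ _ h1 h2 => le_trans h1 h2⟩
  exact List.isChain_iff_pairwise.mp (h.imp (fun {a b} hs => by
    rcases hs with ⟨h1, _⟩ | ⟨h1, _⟩ <;> omega))

lemma valid_cons {N k : ℕ} {L : List (ℕ × ℕ)} {q : ℕ × ℕ}
    (hL : Valid N k L) (hq : InGrid N k q) (hs : Step q L.headI) :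
    Valid N k (q :: L) := by
  obtain ⟨hne, hg, hc⟩ := hL
  refine ⟨by simp, ?_, ?_⟩
  · intro a ha
    rcases List.mem_cons.mp ha with rfl | ha
    · exact hq
    · exact hg a ha
  · rw [List.Chain', List.isChain_cons]
    refine ⟨?_, hc⟩
    intro b hb
    cases L with
    | nil => simp at hne
    | cons c t => simp_all

lemma valid_append {N k : ℕ} {A L : List (ℕ × ℕ)}
    (hA : Valid N k A) (hL : Valid N k L) (hs : Step (A.getLast hA.1) L.headI) :
    Valid N k (A ++ L) := by
  obtain ⟨hne, hg, hc⟩ := hA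
  obtain ⟨hne', hg', hc'⟩ := hL
  refine ⟨by simp [hne], ?_, ?_⟩
  · intro a ha
    rcases List.mem_append.mp ha with ha | ha
    · exact hg a ha
    · exact hg' a ha
  · rw [List.Chain', List.isChain_append]
    refine ⟨hc, hc', ?_⟩
    intro x hx y hy
    rw [List.getLast?_eq_getLast hne] at hx
    cases L with
    | nil => simp at hne'
    | cons c t =>
      simp only [List.head?_cons, Option.mem_some_iff] at hy
      simp only [Option.mem_some_iff] at hx
      subst hx; subst hy
      simpa using hs

def Good (N k : ℕ) (F : List (List (ℕ × ℕ))) : Prop :=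
  (∀ L ∈ F, Valid N k L) ∧ F.Pairwise (fun L M => Disjoint (supp L) (supp M))

def FUnion (F : List (List (ℕ × ℕ))) : Set (ℕ × ℕ) := {a | ∃ L ∈ F, a ∈ L}

def μ (F : List (List (ℕ × ℕ))) : ℕ := (F.map (fun L => L.headI.1 - 1)).sum

lemma good_perm {N k : ℕ} {F G : List (List (ℕ × ℕ))} (h : F ~ G) (hF : Good N k F) :
    Good N k G :=
  ⟨fun L hL => hF.1 L (h.symm.subset hL), hF.2.perm h (by intro x y hd; exact hd.symm)⟩

lemma funion_perm {F G : List (List (ℕ × ℕ))} (h : F ~ G) : FUnion F = FUnion G := by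
  ext a; constructor <;> rintro ⟨L, hL, ha⟩
  · exact ⟨L, h.subset hL, ha⟩
  · exact ⟨L, h.symm.subset hL, ha⟩

lemma mu_perm {F G : List (List (ℕ × ℕ))} (h : F ~ G) : μ F = μ G :=
  (h.map _).sum_eq


lemma headI_mem' {α : Type*} [Inhabited α] {l : List α} (h : l ≠ []) : l.headI ∈ l := by
  cases l with
  | nil => simp at h
  | cons a t => simp

lemma head_x_one {N k : ℕ} {F : List (List (ℕ × ℕ))} (hF : Good N k F)
    (h : ∀ L ∈ F, ¬ 2 ≤ L.headI.1) : ∀ L ∈ F, L.headI.1 = 1 := by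
  intro L hL
  have h1 : 1 ≤ L.headI.1 := ((hF.1 L hL).2.1 L.headI (headI_mem' (hF.1 L hL).1)).1
  have := h L hL
  omega

lemma term_le_mu {F : List (List (ℕ × ℕ))} {L : List (ℕ × ℕ)} (hL : L ∈ F) :
    L.headI.1 - 1 ≤ μ F :=
  List.single_le_sum (fun _ _ => Nat.zero_le _) _ (List.mem_map_of_mem hL)

lemma loop (N k : ℕ) : ∀ n (F : List (List (ℕ × ℕ))), Good N k F → μ F ≤ n →
    ∃ G, Good N k G ∧ (∀ L ∈ G, L.headI.1 = 1) ∧ G.length ≤ F.length ∧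
      (F ≠ [] → G ≠ []) ∧ FUnion F ⊆ FUnion G := by
  intro n
  induction n with
  | zero =>
    intro F hF hμ
    refine ⟨F, hF, head_x_one hF ?_, le_rfl, fun h => h, subset_rfl⟩
    intro L hL h2
    have := term_le_mu hL
    omega
  | succ n ih =>
    intro F hF hμ
    by_cases hbad : ∃ L ∈ F, 2 ≤ L.headI.1
    swap
    · push_neg at hbad
      refine ⟨F, hF, head_x_one hF ?_, le_rfl, fun h => h, subset_rfl⟩
      intro L hL h
      have := hbad L hL
      omega
    obtain ⟨L, hLF, hL2⟩ := hbad
    set x := L.headI.1 with hx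
    set y := L.headI.2 with hy
    set q : ℕ × ℕ := (x - 1, y) with hqdef
    have hLval : Valid N k L := hF.1 L hLF
    have hLne : L ≠ [] := hLval.1
    have hheadmem : L.headI ∈ L := headI_mem' hLne
    have hheadgrid : InGrid N k L.headI := hLval.2.1 _ hheadmem
    have hqgrid : InGrid N k q := by
      obtain ⟨a1, a2, a3, a4⟩ := hheadgrid
      exact ⟨by simp [hqdef]; omega, by simp [hqdef]; omega, by simp [hqdef]; omega,
        by simp [hqdef]; omega⟩
    have hstep : Step q L.headI := Or.inl ⟨by simp [hqdef]; omega, by simp [hqdef, hy]⟩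
    have hqL : q ∉ L := by
      intro hq
      have := diag_head_le hLval.2.2 hq
      simp only [hqdef] at this
      omega
    obtain ⟨F₁, hperm1⟩ : ∃ F₁, F ~ L :: F₁ := ⟨_, List.perm_cons_erase hLF⟩
    have hgood1 : Good N k (L :: F₁) := good_perm hperm1 hF
    have hμF : μ F = (x - 1) + μ F₁ := by rw [mu_perm hperm1]; simp [μ, hx]
    by_cases hq : ∃ M ∈ F₁, q ∈ M
    · -- q lies on another path M
      obtain ⟨M, hMF₁, hqM⟩ := hq
      obtain ⟨F₂, hperm2⟩ : ∃ F₂, F₁ ~ M :: F₂ := ⟨_, List.perm_cons_erase hMF₁⟩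
      have hperm : F ~ L :: M :: F₂ := hperm1.trans (List.Perm.cons L hperm2)
      have hgood : Good N k (L :: M :: F₂) := good_perm hperm hF
      have hMval : Valid N k M := hgood.1 M (by simp)
      have hdLM : Disjoint (supp L) (supp M) :=
        List.rel_of_pairwise_cons hgood.2 (by simp)
      have hdLP : ∀ P ∈ F₂, Disjoint (supp L) (supp P) := fun P hP =>
        List.rel_of_pairwise_cons hgood.2 (by simp [hP])
      have hgood' := (List.pairwise_cons.mp hgood.2).2
      have hdMP : ∀ P ∈ F₂, Disjoint (supp M) (supp P) := fun P hP =>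
        List.rel_of_pairwise_cons hgood' hP
      have hpF₂ : F₂.Pairwise (fun L M => Disjoint (supp L) (supp M)) :=
        (List.pairwise_cons.mp hgood').2
      have hvF₂ : ∀ P ∈ F₂, Valid N k P := fun P hP => hgood.1 P (by simp [hP])
      obtain ⟨A, B, hAB⟩ := List.append_of_mem hqM
      have hM2 : M = (A ++ [q]) ++ B := by simp [hAB]
      have hAqval : Valid N k (A ++ [q]) := by
        refine ⟨by simp, ?_, ?_⟩
        · intro a ha
          exact hMval.2.1 a (by rw [hM2]; exact List.mem_append_left _ ha)
        · exact hMval.2.2.prefix ⟨B, by rw [← hM2]⟩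
      have hlast : (A ++ [q]).getLast hAqval.1 = q :=
        List.getLast_append_right (l := A) (l' := [q]) (by simp)
      have hmerged : Valid N k ((A ++ [q]) ++ L) :=
        valid_append hAqval hLval (by rw [hlast]; exact hstep)
      have hheadmerged : (A ++ q :: L).headI = M.headI := by
        rw [hAB]; cases A <;> simp
      have hμM : M.headI.1 - 1 + μ F₂ = μ F₁ := by
        rw [mu_perm hperm2]; simp [μ]
      have hsubAq : ∀ a ∈ A ++ [q], a ∈ M := by
        intro a ha; rw [hM2]; exact List.mem_append_left _ ha
      have hsubB : ∀ a ∈ B, a ∈ M := by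
        intro a ha; rw [hM2]; exact List.mem_append_right _ ha
      have hsupm : ∀ a ∈ (A ++ [q]) ++ L, a ∈ M ∨ a ∈ L := by
        intro a ha
        rcases List.mem_append.mp ha with ha | ha
        · exact Or.inl (hsubAq a ha)
        · exact Or.inr ha
      have hdisj_merged : ∀ P ∈ F₂, Disjoint (supp ((A ++ [q]) ++ L)) (supp P) := by
        intro P hP
        rw [Set.disjoint_left]
        intro a ha hc
        rcases hsupm a ha with ha' | ha'
        · exact Set.disjoint_left.mp (hdMP P hP) ha' hc
        · exact Set.disjoint_left.mp (hdLP P hP) ha' hc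
      cases B with
      | nil =>
        -- merge case
        have hgood₀ : Good N k (((A ++ [q]) ++ L) :: F₂) := by
          refine ⟨?_, List.pairwise_cons.mpr ⟨hdisj_merged, hpF₂⟩⟩
          intro P hP
          rcases List.mem_cons.mp hP with rfl | hP
          · exact hmerged
          · exact hvF₂ P hP
        have hμ₀ : μ (((A ++ [q]) ++ L) :: F₂) ≤ n := by
          have e1 : μ (((A ++ [q]) ++ L) :: F₂) = (M.headI.1 - 1) + μ F₂ := by
            simp [μ, hheadmerged]
          omega
        obtain ⟨G, g1, g2, g3, g4, g5⟩ := ih _ hgood₀ hμ₀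
        refine ⟨G, g1, g2, ?_, fun _ => g4 (by simp), ?_⟩
        · have := hperm.length_eq
          simp at this
          simp at g3
          omega
        · intro a ha
          refine g5 ?_
          rw [funion_perm hperm] at ha
          obtain ⟨P, hP, haP⟩ := ha
          rcases List.mem_cons.mp hP with rfl | hP
          · exact ⟨(A ++ [q]) ++ P, by simp, List.mem_append_right _ haP⟩
          rcases List.mem_cons.mp hP with rfl | hP
          · refine ⟨(A ++ [q]) ++ L, by simp, List.mem_append_left _ ?_⟩
            rw [hAB] at haP; simpa using haP
          · exact ⟨P, by simp [hP], haP⟩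
      | cons b B' =>
        -- swap case
        have hsuf : (q :: b :: B') <:+ M := ⟨A, by rw [hAB]⟩
        have hchainsuf : (q :: b :: B').Chain' Step := hMval.2.2.suffix hsuf
        have hstepqb : Step q b := (List.isChain_cons_cons.mp hchainsuf).1
        have hbM : b ∈ M := by rw [hAB]; simp
        have hbL : b ∉ L := fun hc => Set.disjoint_left.mp hdLM hc hbM
        have hbx : b.1 = x - 1 ∧ b.2 = y + 1 := by
          rcases hstepqb with ⟨h1, h2⟩ | ⟨h1, h2⟩
          · exfalso
            apply hbL
            have : b = L.headI := by
              have : q.1 = x - 1 := rfl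
              have : q.2 = y := rfl
              apply Prod.ext <;> simp_all <;> omega
            rw [this]; exact hheadmem
          · constructor <;> simp_all
        have hBval : Valid N k (b :: B') := by
          refine ⟨by simp, ?_, ?_⟩
          · intro a ha
            exact hMval.2.1 a (by rw [hAB]; exact List.mem_append_right _ (by simp [ha]))
          · exact (List.isChain_cons_cons.mp hchainsuf).2
        have hnodupM : M.Nodup := nodup_of_chain hMval.2.2
        have hdAqB : List.Disjoint (A ++ [q]) (b :: B') := by
          apply List.disjoint_of_nodup_append
          rw [← hM2]; exact hnodupM
        have hdisj_mb : Disjoint (supp ((A ++ [q]) ++ L)) (supp (b :: B')) := by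
          rw [Set.disjoint_left]
          intro a ha hc
          rcases List.mem_append.mp ha with ha' | ha'
          · exact hdAqB ha' hc
          · exact Set.disjoint_left.mp hdLM ha' (hsubB a hc)
        have hdisj_bP : ∀ P ∈ F₂, Disjoint (supp (b :: B')) (supp P) := by
          intro P hP
          rw [Set.disjoint_left]
          intro a ha hc
          exact Set.disjoint_left.mp (hdMP P hP) (hsubB a ha) hc
        have hgood₀ : Good N k (((A ++ [q]) ++ L) :: (b :: B') :: F₂) := by
          refine ⟨?_, ?_⟩
          · intro P hP
            rcases List.mem_cons.mp hP with rfl | hP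
            · exact hmerged
            rcases List.mem_cons.mp hP with rfl | hP
            · exact hBval
            · exact hvF₂ P hP
          · rw [List.pairwise_cons, List.pairwise_cons]
            refine ⟨?_, hdisj_bP, hpF₂⟩
            intro P hP
            rcases List.mem_cons.mp hP with rfl | hP
            · exact hdisj_mb
            · exact hdisj_merged P hP
        have hμ₀ : μ (((A ++ [q]) ++ L) :: (b :: B') :: F₂) ≤ n := by
          have e1 : μ (((A ++ [q]) ++ L) :: (b :: B') :: F₂)
              = (M.headI.1 - 1) + (b.1 - 1) + μ F₂ := by
            simp [μ, hheadmerged]; ring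
          rw [e1, hbx.1]
          omega
        obtain ⟨G, g1, g2, g3, g4, g5⟩ := ih _ hgood₀ hμ₀
        refine ⟨G, g1, g2, ?_, fun _ => g4 (by simp), ?_⟩
        · have := hperm.length_eq
          simp at this
          simp at g3
          omega
        · intro a ha
          refine g5 ?_
          rw [funion_perm hperm] at ha
          obtain ⟨P, hP, haP⟩ := ha
          rcases List.mem_cons.mp hP with rfl | hP
          · exact ⟨(A ++ [q]) ++ P, by simp, List.mem_append_right _ haP⟩
          rcases List.mem_cons.mp hP with rfl | hP
          · rw [hM2] at haP
            rcases List.mem_append.mp haP with h' | h'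
            · exact ⟨(A ++ [q]) ++ L, by simp, List.mem_append_left _ h'⟩
            · exact ⟨b :: B', by simp, h'⟩
          · exact ⟨P, by simp [hP], haP⟩
    · -- q is fresh
      push_neg at hq
      have hnew : Valid N k (q :: L) := valid_cons hLval hqgrid hstep
      have hgood₀ : Good N k ((q :: L) :: F₁) := by
        refine ⟨?_, ?_⟩
        · intro P hP
          rcases List.mem_cons.mp hP with rfl | hP
          · exact hnew
          · exact hgood1.1 P (by simp [hP])
        · rw [List.pairwise_cons]
          refine ⟨?_, (List.pairwise_cons.mp hgood1.2).2⟩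
          intro P hP
          rw [Set.disjoint_left]
          intro a ha hc
          rcases List.mem_cons.mp ha with rfl | ha
          · exact hq P hP hc
          · exact Set.disjoint_left.mp (List.rel_of_pairwise_cons hgood1.2 hP) ha hc
      have hμ₀ : μ ((q :: L) :: F₁) ≤ n := by
        have : μ ((q :: L) :: F₁) = (x - 1 - 1) + μ F₁ := by simp [μ, hqdef]
        omega
      obtain ⟨G, g1, g2, g3, g4, g5⟩ := ih _ hgood₀ hμ₀
      refine ⟨G, g1, g2, ?_, fun _ => g4 (by simp), ?_⟩
      · have := hperm1.length_eq
        simp at this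
        simp at g3
        omega
      · intro a ha
        refine g5 ?_
        rw [funion_perm hperm1] at ha
        obtain ⟨P, hP, haP⟩ := ha
        rcases List.mem_cons.mp hP with rfl | hP
        · exact ⟨q :: P, by simp, by simp [haP]⟩
        · exact ⟨P, by simp [hP], haP⟩

lemma expand (N k : ℕ) (hN : 1 ≤ N) :
    ∀ j (G : List (List (ℕ × ℕ))), Good N k G → (∀ L ∈ G, L.headI.1 = 1) →
      G.length + j ≤ k →
    ∃ H, Good N k H ∧ (∀ L ∈ H, L.headI.1 = 1) ∧ H.length = G.length + j ∧
      FUnion G ⊆ FUnion H := by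
  intro j
  induction j with
  | zero => intro G hG hh _; exact ⟨G, hG, hh, rfl, subset_rfl⟩
  | succ j ih =>
    intro G hG hh hlen
    classical
    suffices hstep : ∃ G', Good N k G' ∧ (∀ L ∈ G', L.headI.1 = 1) ∧
        G'.length = G.length + 1 ∧ FUnion G ⊆ FUnion G' by
      obtain ⟨G', g1, g2, g3, g4⟩ := hstep
      obtain ⟨H, h1, h2, h3, h4⟩ := ih G' g1 g2 (by omega)
      exact ⟨H, h1, h2, by omega, g4.trans h4⟩
    by_cases hfree : ∃ yy, 1 ≤ yy ∧ yy ≤ k ∧ ((1 : ℕ), yy) ∉ FUnion G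
    · obtain ⟨yy, hy1, hy2, hyf⟩ := hfree
      refine ⟨[((1 : ℕ), yy)] :: G, ⟨?_, ?_⟩, ?_, by simp, ?_⟩
      · intro P hP
        rcases List.mem_cons.mp hP with rfl | hP
        · exact ⟨by simp, by intro a ha; simp at ha; subst ha; exact ⟨le_rfl, hN, hy1, hy2⟩,
            by simp [List.Chain']⟩
        · exact hG.1 P hP
      · rw [List.pairwise_cons]
        refine ⟨?_, hG.2⟩
        intro P hP
        rw [Set.disjoint_left]
        intro a ha hc
        simp only [mem_supp, List.mem_singleton] at ha
        subst ha
        exact hyf ⟨P, hP, hc⟩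
      · intro P hP
        rcases List.mem_cons.mp hP with rfl | hP
        · simp
        · exact hh P hP
      · intro a ⟨P, hP, haP⟩
        exact ⟨P, by simp [hP], haP⟩
    · push_neg at hfree
      -- every cell (1, yy) is covered; find a path with two points in column 1
      have htwo : ∃ L ∈ G, ∃ a c : ℕ × ℕ, a ∈ L ∧ c ∈ L ∧ a ≠ c ∧ a.1 = 1 ∧ c.1 = 1 := by
        by_contra hcon
        push_neg at hcon
        have hchoose : ∀ yy : ℕ, ∃ L, yy ∈ Finset.Icc 1 k → L ∈ G ∧ ((1 : ℕ), yy) ∈ L := by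
          intro yy
          by_cases hyy : yy ∈ Finset.Icc 1 k
          · simp only [Finset.mem_Icc] at hyy
            obtain ⟨L, hL, haL⟩ := hfree yy hyy.1 hyy.2
            exact ⟨L, fun _ => ⟨hL, haL⟩⟩
          · exact ⟨[], fun h => absurd h hyy⟩
        choose f hf using hchoose
        have hinj : Set.InjOn f (Finset.Icc 1 k) := by
          intro y1 hy1 y2 hy2 hf12
          by_contra hne
          have h1 := hf y1 hy1
          have h2 := hf y2 hy2
          rw [hf12] at h1
          exact hcon (f y2) h2.1 (1, y1) (1, y2) h1.2 h2.2
            (by simp [Prod.ext_iff]; exact hne) rfl rfl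
        have hmaps : ∀ yy ∈ Finset.Icc 1 k, f yy ∈ G.toFinset := by
          intro yy hyy
          simpa using (hf yy hyy).1
        have hcard := Finset.card_le_card_of_injOn f hmaps hinj
        have h1 : (Finset.Icc 1 k).card = k := by simp
        have h2 : G.toFinset.card ≤ G.length := G.toFinset_card_le
        omega
      obtain ⟨L, hLG, a, c, haL, hcL, hac, ha1, hc1⟩ := htwo
      have hLval : Valid N k L := hG.1 L hLG
      obtain ⟨hne, hgrid, hchain⟩ := hLval
      cases L with
      | nil => simp at hne
      | cons hd0 t =>
        cases t with
        | nil =>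
          exfalso
          simp only [List.mem_singleton] at haL hcL
          exact hac (haL.trans hcL.symm)
        | cons b t' =>
          have hh1 : hd0.1 = 1 := hh _ hLG
          have hstepb : Step hd0 b := (List.isChain_cons_cons.mp hchain).1
          have hb1 : b.1 = 1 := by
            rcases hstepb with ⟨e1, _⟩ | ⟨e1, _⟩
            · exfalso
              have hx := x_mono hchain
              have hA : ∀ e : ℕ × ℕ, e ∈ b :: t' → 2 ≤ e.1 := by
                intro e he
                rcases List.mem_cons.mp he with rfl | he
                · omega
                · have := List.rel_of_pairwise_cons (List.pairwise_cons.mp hx).2 he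
                  omega
              have ha' : a = hd0 := by
                rcases List.mem_cons.mp haL with rfl | ha'
                · rfl
                · have := hA a ha'; omega
              have hc' : c = hd0 := by
                rcases List.mem_cons.mp hcL with rfl | hc'
                · rfl
                · have := hA c hc'; omega
              exact hac (ha'.trans hc'.symm)
            · omega
          obtain ⟨rest, hp⟩ : ∃ rest, G ~ (hd0 :: b :: t') :: rest :=
            ⟨_, List.perm_cons_erase hLG⟩
          have hgoodp : Good N k ((hd0 :: b :: t') :: rest) := good_perm hp hG
          have hdLr : ∀ P ∈ rest, Disjoint (supp (hd0 :: b :: t')) (supp P) := fun P hP =>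
            List.rel_of_pairwise_cons hgoodp.2 hP
          have hnodup : (hd0 :: b :: t').Nodup := nodup_of_chain hchain
          have hhnot : hd0 ∉ b :: t' := (List.nodup_cons.mp hnodup).1
          refine ⟨[hd0] :: (b :: t') :: rest, ⟨?_, ?_⟩, ?_, ?_, ?_⟩
          · intro P hP
            rcases List.mem_cons.mp hP with rfl | hP
            · exact ⟨by simp, fun e he => hgrid e (by simp at he; simp [he]), by simp [List.Chain']⟩
            rcases List.mem_cons.mp hP with rfl | hP
            · exact ⟨by simp, fun e he => hgrid e (by simp [List.mem_cons.mp he]),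
                (List.isChain_cons_cons.mp hchain).2⟩
            · exact hgoodp.1 P (by simp [hP])
          · rw [List.pairwise_cons, List.pairwise_cons]
            refine ⟨?_, ?_, (List.pairwise_cons.mp hgoodp.2).2⟩
            · intro P hP
              rw [Set.disjoint_left]
              intro e he hc2
              simp only [mem_supp, List.mem_singleton] at he
              subst he
              rcases List.mem_cons.mp hP with rfl | hP
              · exact hhnot hc2
              · exact Set.disjoint_left.mp (hdLr P hP) (mem_supp.mpr (by simp)) hc2
            · intro P hP
              rw [Set.disjoint_left]
              intro e he hc2
              exact Set.disjoint_left.mp (hdLr P hP)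
                (mem_supp.mpr (by simp [List.mem_cons.mp he])) hc2
          · intro P hP
            rcases List.mem_cons.mp hP with rfl | hP
            · exact hh1
            rcases List.mem_cons.mp hP with rfl | hP
            · exact hb1
            · exact hh P (hp.symm.subset (by simp [hP]))
          · have := hp.length_eq
            simp at this ⊢
            omega
          · intro e he
            rw [funion_perm hp] at he
            obtain ⟨P, hP, heP⟩ := he
            rcases List.mem_cons.mp hP with rfl | hP
            · rcases List.mem_cons.mp heP with rfl | heP
              · exact ⟨[e], by simp, by simp⟩
              · exact ⟨b :: t', by simp, heP⟩
            · exact ⟨P, by simp [hP], heP⟩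

lemma list_to_path {N k : ℕ} {L : List (ℕ × ℕ)} (hL : Valid N k L) :
    IsUpRightPath N k L.length (fun i => L.getD (i - 1) (1, 1)) ∧
    pathSupport L.length (fun i => L.getD (i - 1) (1, 1)) = supp L ∧
    L.getD 0 (1, 1) = L.headI := by
  obtain ⟨hne, hgrid, hchain⟩ := hL
  have hget : ∀ i, 1 ≤ i → i ≤ L.length → ∀ (h : i - 1 < L.length),
      L.getD (i - 1) (1, 1) = L[i - 1] := by
    intro i h1 h2 h
    exact List.getD_eq_getElem L (1, 1) h
  refine ⟨⟨?_, ?_⟩, ?_, ?_⟩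
  · intro i h1 h2
    dsimp only
    have hlt : i - 1 < L.length := by omega
    rw [hget i h1 h2 hlt]
    have := hgrid L[i-1] (List.getElem_mem hlt)
    exact ⟨⟨this.1, this.2.1⟩, this.2.2.1, this.2.2.2⟩
  · intro i h1 h2
    dsimp only
    have hlt : i - 1 < L.length := by omega
    have hlt2 : i - 1 - 1 < L.length := by omega
    rw [hget i (by omega) h2 hlt, hget (i-1) (by omega) (by omega) hlt2]
    have := List.isChain_iff_getElem.mp hchain (i - 2) (by omega)
    simp only [show i - 1 = i - 2 + 1 from by omega,
      show i - 1 - 1 = i - 2 from by omega]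
    rcases this with ⟨h1', h2'⟩ | ⟨h1', h2'⟩
    · exact Or.inl ⟨h1', h2'⟩
    · exact Or.inr ⟨h1', h2'⟩
  · ext a
    simp only [pathSupport, Set.mem_image, Set.mem_Icc, mem_supp]
    constructor
    · rintro ⟨i, ⟨hi1, hi2⟩, rfl⟩
      have hlt : i - 1 < L.length := by omega
      rw [hget i hi1 hi2 hlt]
      exact List.getElem_mem hlt
    · intro ha
      obtain ⟨j, hj, rfl⟩ := List.mem_iff_getElem.mp ha
      refine ⟨j + 1, ⟨by omega, by omega⟩, ?_⟩
      have : j + 1 - 1 = j := by omega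
      rw [this]
      exact List.getD_eq_getElem L (1, 1) hj
  · cases L with
    | nil => simp at hne
    | cons a t => simp

lemma path_to_list {N k p : ℕ} {g : ℕ → ℕ × ℕ} (hp : 1 ≤ p)
    (hg : IsUpRightPath N k p g) :
    Valid N k ((List.range p).map (fun i => g (i + 1))) ∧
    supp ((List.range p).map (fun i => g (i + 1))) = pathSupport p g := by
  set L := (List.range p).map (fun i => g (i + 1)) with hLdef
  have hlen : L.length = p := by simp [hLdef]
  have hgetL : ∀ (i : ℕ) (h : i < L.length), L[i] = g (i + 1) := by
    intro i h
    simp [hLdef]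
  refine ⟨⟨?_, ?_, ?_⟩, ?_⟩
  · intro h
    rw [h] at hlen
    simp at hlen
    omega
  · intro a ha
    obtain ⟨j, hj, rfl⟩ := List.mem_iff_getElem.mp ha
    rw [hgetL j hj]
    have := hg.1 (j + 1) (by omega) (by omega : j + 1 ≤ p)
    exact ⟨this.1.1, this.1.2, this.2.1, this.2.2⟩
  · rw [List.Chain', List.isChain_iff_getElem]
    intro i hi
    rw [hgetL i (by omega), hgetL (i + 1) (by omega)]
    have hi' : i + 2 ≤ p := by rw [hlen] at hi; omega
    have := hg.2 (i + 2) (by omega) hi'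
    have e : i + 2 - 1 = i + 1 := by omega
    rw [e] at this
    rcases this with ⟨h1, h2⟩ | ⟨h1, h2⟩
    · exact Or.inl ⟨h1, h2⟩
    · exact Or.inr ⟨h1, h2⟩
  · ext a
    simp only [pathSupport, Set.mem_image, Set.mem_Icc, mem_supp]
    constructor
    · intro ha
      obtain ⟨j, hj, rfl⟩ := List.mem_iff_getElem.mp ha
      rw [hgetL j hj]
      exact ⟨j + 1, ⟨by omega, by rw [hlen] at hj; omega⟩, rfl⟩
    · rintro ⟨i, ⟨hi1, hi2⟩, rfl⟩
      rw [List.mem_iff_getElem]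
      refine ⟨i - 1, by omega, ?_⟩
      rw [hgetL (i - 1) (by omega)]
      congr 1
      omega

end URP

/-- Any family of `ℓ ≤ k` up-right paths in `{1,…,N} × {1,…,k}` with pairwise
disjoint supports can be covered by a family of `ℓ` up-right paths with pairwise
disjoint supports whose starting abscissas are all equal to `1`. -/
theorem upRightPaths_extend_to_start_one
    (N k ℓ : ℕ) (hN : 1 ≤ N) (hℓ : 1 ≤ ℓ) (hℓk : ℓ ≤ k)
    (pl : Fin ℓ → ℕ) (π : Fin ℓ → ℕ → ℕ × ℕ)
    (hpl : ∀ r, 1 ≤ pl r)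
    (hπ : ∀ r, IsUpRightPath N k (pl r) (π r))
    (hdisj : ∀ r s, r ≠ s → Disjoint (pathSupport (pl r) (π r)) (pathSupport (pl s) (π s))) :
    ∃ (pl' : Fin ℓ → ℕ) (π' : Fin ℓ → ℕ → ℕ × ℕ),
      (∀ r, 1 ≤ pl' r) ∧
      (∀ r, IsUpRightPath N k (pl' r) (π' r)) ∧
      (∀ r, (π' r 1).1 = 1) ∧
      (∀ r s, r ≠ s → Disjoint (pathSupport (pl' r) (π' r)) (pathSupport (pl' s) (π' s))) ∧
      (⋃ r, pathSupport (pl r) (π r)) ⊆ ⋃ r, pathSupport (pl' r) (π' r) := by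
  classical
  set toL : Fin ℓ → List (ℕ × ℕ) :=
    fun r => (List.range (pl r)).map (fun i => π r (i + 1)) with htoL
  have hconv : ∀ r, URP.Valid N k (toL r) ∧ URP.supp (toL r) = pathSupport (pl r) (π r) :=
    fun r => URP.path_to_list (hpl r) (hπ r)
  set F : List (List (ℕ × ℕ)) := (List.finRange ℓ).map toL with hFdef
  have hFlen : F.length = ℓ := by simp [hFdef]
  have hFne : F ≠ [] := by
    intro h
    rw [h] at hFlen
    simp at hFlen
    omega
  have hgoodF : URP.Good N k F := by
    constructor
    · intro L hL
      obtain ⟨r, _, rfl⟩ := List.mem_map.mp hL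
      exact (hconv r).1
    · rw [List.pairwise_map]
      refine (List.nodup_finRange ℓ).imp ?_
      intro r s hrs
      rw [(hconv r).2, (hconv s).2]
      exact hdisj r s hrs
  obtain ⟨G, hG1, hG2, hG3, hG4, hG5⟩ := URP.loop N k (URP.μ F) F hgoodF le_rfl
  have hGne : G ≠ [] := hG4 hFne
  have hGlen : G.length ≤ ℓ := by rw [← hFlen]; exact hG3
  obtain ⟨H, hH1, hH2, hH3, hH4⟩ := URP.expand N k hN (ℓ - G.length) G hG1 hG2 (by omega)
  have hHlen : H.length = ℓ := by
    rw [hH3]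
    have : 1 ≤ G.length := List.length_pos_iff.mpr hGne
    omega
  have hidx : ∀ r : Fin ℓ, (r : ℕ) < H.length := by
    intro r; rw [hHlen]; exact r.2
  set pl' : Fin ℓ → ℕ := fun r => (H[(r : ℕ)]'(hidx r)).length with hpl'
  set π' : Fin ℓ → ℕ → ℕ × ℕ :=
    fun r i => (H[(r : ℕ)]'(hidx r)).getD (i - 1) (1, 1) with hπ'
  have hmemH : ∀ r : Fin ℓ, H[(r : ℕ)]'(hidx r) ∈ H := fun r => List.getElem_mem _
  have hvalidH : ∀ r : Fin ℓ, URP.Valid N k (H[(r : ℕ)]'(hidx r)) :=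
    fun r => hH1.1 _ (hmemH r)
  have hconv' := fun r : Fin ℓ => URP.list_to_path (hvalidH r)
  refine ⟨pl', π', ?_, ?_, ?_, ?_, ?_⟩
  · intro r
    exact List.length_pos_iff.mpr (hvalidH r).1
  · intro r
    exact (hconv' r).1
  · intro r
    have h0 : π' r 1 = (H[(r : ℕ)]'(hidx r)).headI := (hconv' r).2.2
    rw [h0]
    exact hH2 _ (hmemH r)
  · intro r s hrs
    rw [show pathSupport (pl' r) (π' r) = URP.supp (H[(r : ℕ)]'(hidx r)) from (hconv' r).2.1,
      show pathSupport (pl' s) (π' s) = URP.supp (H[(s : ℕ)]'(hidx s)) from (hconv' s).2.1]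
    have hpw := List.pairwise_iff_getElem.mp hH1.2
    rcases lt_or_gt_of_ne (fun h => hrs (Fin.ext h) : (r : ℕ) ≠ (s : ℕ)) with h | h
    · exact hpw _ _ (hidx r) (hidx s) h
    · exact (hpw _ _ (hidx s) (hidx r) h).symm
  · intro a ha
    obtain ⟨r, har⟩ := Set.mem_iUnion.mp ha
    have haF : a ∈ URP.FUnion F := by
      refine ⟨toL r, List.mem_map.mpr ⟨r, List.mem_finRange r, rfl⟩, ?_⟩
      rw [← URP.mem_supp, (hconv r).2]
      exact har
    have haH : a ∈ URP.FUnion H := hH4 (hG5 haF)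
    obtain ⟨P, hP, haP⟩ := haH
    obtain ⟨j, hj, rfl⟩ := List.mem_iff_getElem.mp hP
    rw [Set.mem_iUnion]
    refine ⟨⟨j, by omega⟩, ?_⟩
    rw [show pathSupport (pl' ⟨j, by omega⟩) (π' ⟨j, by omega⟩)
      = URP.supp (H[j]'hj) from (hconv' ⟨j, by omega⟩).2.1]
    exact haP
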